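/- Let (Φ_N) be a Følner sequence in ℤ, let H be a complex Hilbert space, let C ≥ 0, and let (u_n)_{n∈ℤ} be a family in H with ‖u_n‖ ≤ C for all n. Then for every integer K ≥ 1, limsup_{N→∞} ( ‖𝔼_{n∈Φ_N} u_n‖² − | (2/K²) Σ_{k=−K}^{K} (K−|k|) · 𝔼_{n∈Φ_N} ⟨u_n, u_{n+k}⟩ | ) ≤ 0. -/

import Mathlib

open Filter

section vdcaux
open Finset

section helpers

lemma aux_sum_diff {E : Type*} [NormedAddCommGroup E] (s t : Finset ℤ) (f : ℤ → E)
    (D : ℝ) (hf : ∀ n, ‖f n‖ ≤ D) :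
    ‖(∑ n ∈ s, f n) - ∑ n ∈ t, f n‖ ≤ D * (symmDiff s t).card := by
  have h1 : (∑ n ∈ s, f n) - ∑ n ∈ t, f n = (∑ n ∈ s \ t, f n) - ∑ n ∈ t \ s, f n := by
    rw [← Finset.sum_inter_add_sum_sdiff s t f, ← Finset.sum_inter_add_sum_sdiff t s f,
      Finset.inter_comm t s]
    abel
  have hcard : ((symmDiff s t).card : ℝ) = (s \ t).card + (t \ s).card := by
    rw [symmDiff_def, Finset.sup_eq_union,
      Finset.card_union_of_disjoint (disjoint_sdiff_sdiff)]
    push_cast; ring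
  have h2 : ∀ (w : Finset ℤ), ‖∑ n ∈ w, f n‖ ≤ D * w.card := by
    intro w
    calc ‖∑ n ∈ w, f n‖ ≤ ∑ n ∈ w, D := norm_sum_le_of_le w (fun n _ => hf n)
    _ = D * w.card := by rw [Finset.sum_const, nsmul_eq_mul]; ring
  rw [h1, hcard]
  calc ‖(∑ n ∈ s \ t, f n) - ∑ n ∈ t \ s, f n‖
      ≤ ‖∑ n ∈ s \ t, f n‖ + ‖∑ n ∈ t \ s, f n‖ := norm_sub_le _ _
    _ ≤ D * (s \ t).card + D * (t \ s).card := add_le_add (h2 _) (h2 _)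
    _ = D * ((s \ t).card + (t \ s).card) := by ring

lemma aux_cs {E : Type*} [NormedAddCommGroup E] (s : Finset ℤ) (v : ℤ → E) :
    ‖∑ n ∈ s, v n‖ ^ 2 ≤ s.card * ∑ n ∈ s, ‖v n‖ ^ 2 := by
  calc ‖∑ n ∈ s, v n‖ ^ 2 ≤ (∑ n ∈ s, ‖v n‖) ^ 2 := by
        apply pow_le_pow_left₀ (norm_nonneg _) (norm_sum_le _ _)
    _ = (∑ n ∈ s, 1 * ‖v n‖) ^ 2 := by simp
    _ ≤ (∑ n ∈ s, (1:ℝ) ^ 2) * ∑ n ∈ s, ‖v n‖ ^ 2 := Finset.sum_mul_sq_le_sq_mul_sq s _ _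
    _ = s.card * ∑ n ∈ s, ‖v n‖ ^ 2 := by simp

lemma aux_count (K : ℕ) (k : ℤ) (hk : k.natAbs ≤ K) :
    ((Finset.range K ×ˢ Finset.range K).filter
      (fun p => (p.2 : ℤ) - (p.1 : ℤ) = k)).card = K - k.natAbs := by
  rcases le_or_gt 0 k with h | h
  · have hk' : (k.natAbs : ℤ) = k := Int.natAbs_of_nonneg h
    have himg : (Finset.range K ×ˢ Finset.range K).filter
        (fun p => (p.2 : ℤ) - (p.1 : ℤ) = k)
        = (Finset.range (K - k.natAbs)).image (fun j => (j, j + k.natAbs)) := by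
      ext ⟨a, b⟩
      simp only [Finset.mem_filter, Finset.mem_product, Finset.mem_range, Finset.mem_image,
        Prod.mk.injEq]
      constructor
      · rintro ⟨⟨ha, hb⟩, hab⟩
        exact ⟨a, by omega, by omega, by omega⟩
      · rintro ⟨j, hj, rfl, rfl⟩
        refine ⟨⟨by omega, by omega⟩, by omega⟩
    rw [himg, Finset.card_image_of_injective _ (fun a b hab => by
      simpa using (Prod.mk.injEq _ _ _ _ ▸ hab).1), Finset.card_range]
  · have hk' : (k.natAbs : ℤ) = -k := Int.ofNat_natAbs_of_nonpos h.le
    have himg : (Finset.range K ×ˢ Finset.range K).filter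
        (fun p => (p.2 : ℤ) - (p.1 : ℤ) = k)
        = (Finset.range (K - k.natAbs)).image (fun j => (j + k.natAbs, j)) := by
      ext ⟨a, b⟩
      simp only [Finset.mem_filter, Finset.mem_product, Finset.mem_range, Finset.mem_image,
        Prod.mk.injEq]
      constructor
      · rintro ⟨⟨ha, hb⟩, hab⟩
        exact ⟨b, by omega, by omega, by omega⟩
      · rintro ⟨j, hj, rfl, rfl⟩
        refine ⟨⟨by omega, by omega⟩, by omega⟩
    rw [himg, Finset.card_image_of_injective _ (fun a b hab => by
      simpa using (Prod.mk.injEq _ _ _ _ ▸ hab).2), Finset.card_range]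

lemma aux_pairs (K : ℕ) (f : ℤ → ℂ) :
    (∑ j ∈ Finset.range K, ∑ j' ∈ Finset.range K, f ((j' : ℤ) - (j : ℤ)))
      = ∑ k ∈ Finset.Icc (-(K:ℤ)) (K:ℤ), (((K : ℤ) - |k| : ℤ) : ℂ) * f k := by
  have hmaps : ∀ p ∈ Finset.range K ×ˢ Finset.range K,
      ((p.2 : ℤ) - (p.1 : ℤ)) ∈ Finset.Icc (-(K:ℤ)) (K:ℤ) := by
    rintro ⟨a, b⟩ hp
    simp only [Finset.mem_product, Finset.mem_range] at hp
    simp only [Finset.mem_Icc]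
    omega
  have hfib := Finset.sum_fiberwise_of_maps_to hmaps (fun p => f ((p.2 : ℤ) - (p.1 : ℤ)))
  rw [← Finset.sum_product']
  rw [← hfib]
  apply Finset.sum_congr rfl
  intro k hk
  have hk' : k.natAbs ≤ K := by
    simp only [Finset.mem_Icc] at hk; omega
  have hconst : ∀ p ∈ (Finset.range K ×ˢ Finset.range K).filter
      (fun p => (p.2 : ℤ) - (p.1 : ℤ) = k), f ((p.2 : ℤ) - (p.1 : ℤ)) = f k := by
    intro p hp
    rw [(Finset.mem_filter.mp hp).2]
  rw [Finset.sum_congr rfl hconst, Finset.sum_const, aux_count K k hk', nsmul_eq_mul]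
  congr 1
  have hz : ((K - k.natAbs : ℕ) : ℤ) = (K:ℤ) - |k| := by rw [Int.abs_eq_natAbs]; omega
  rw [← hz]
  push_cast
  ring

lemma aux_reindex {E : Type*} [AddCommMonoid E] (s : Finset ℤ) (j : ℤ) (g : ℤ → E) :
    ∑ m ∈ s.image (fun n => j + n), g m = ∑ n ∈ s, g (n + j) := by
  rw [Finset.sum_image (by intro x _ y _ h; exact add_left_cancel h)]
  exact Finset.sum_congr rfl (fun n _ => by rw [add_comm])

lemma aux_shift_err {E : Type*} [NormedAddCommGroup E] (s : Finset ℤ) (j : ℤ) (g : ℤ → E)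
    (D : ℝ) (hg : ∀ n, ‖g n‖ ≤ D) :
    ‖(∑ n ∈ s, g (n + j)) - ∑ n ∈ s, g n‖ ≤
      D * ((symmDiff (s.image (fun n => j + n)) s).card : ℝ) := by
  rw [← aux_reindex s j g]
  exact aux_sum_diff _ s g D hg

end helpers

noncomputable def auxS {H : Type} [NormedAddCommGroup H] [InnerProductSpace ℂ H]
    (s : Finset ℤ) (u : ℤ → H) (k : ℤ) : ℂ :=
  ∑ n ∈ s, inner ℂ (u n) (u (n + k))

lemma auxS_def {H : Type} [NormedAddCommGroup H] [InnerProductSpace ℂ H]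
    (s : Finset ℤ) (u : ℤ → H) (k : ℤ) :
    auxS s u k = ∑ n ∈ s, (inner ℂ (u n) (u (n + k)) : ℂ) := rfl

section main
variable {H : Type} [NormedAddCommGroup H] [InnerProductSpace ℂ H]

lemma aux_avg_norm (s : Finset ℤ) (C : ℝ) (g : ℤ → H)
    (hg : ∀ n, ‖g n‖ ≤ C) :
    ‖((s.card : ℂ))⁻¹ • ∑ n ∈ s, g n‖ ≤ C := by
  rcases s.eq_empty_or_nonempty with rfl | hs
  · simpa using le_trans (norm_nonneg (g 0)) (hg 0)
  have hP0 : 0 < (s.card : ℝ) := by exact_mod_cast Finset.card_pos.mpr hs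
  rw [norm_smul, norm_inv, Complex.norm_natCast]
  calc ((s.card:ℝ))⁻¹ * ‖∑ n ∈ s, g n‖ ≤ ((s.card:ℝ))⁻¹ * (C * s.card) := by
        gcongr
        calc ‖∑ n ∈ s, g n‖ ≤ ∑ n ∈ s, C := norm_sum_le_of_le s (fun n _ => hg n)
          _ = C * s.card := by rw [Finset.sum_const, nsmul_eq_mul]; ring
    _ = C := by field_simp

set_option maxHeartbeats 1600000 in
lemma aux_main (s : Finset ℤ) (hs : s.Nonempty) (C : ℝ) (hC : 0 ≤ C) (u : ℤ → H)
    (hu : ∀ n, ‖u n‖ ≤ C) (K : ℕ) (hK : 1 ≤ K) :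
    ‖((s.card : ℂ))⁻¹ • ∑ n ∈ s, u n‖ ^ 2
      - ‖((2 / (K : ℂ) ^ 2) * ∑ k ∈ Finset.Icc (-(K : ℤ)) (K : ℤ),
          (((K : ℤ) - |k| : ℤ) : ℂ) *
            (((s.card : ℂ))⁻¹ * ∑ n ∈ s, (inner ℂ (u n) (u (n + k)) : ℂ)))‖
      ≤ 5 * C ^ 2 / K * ∑ j ∈ Finset.range K,
          ((symmDiff (s.image (fun n => (j : ℤ) + n)) s).card : ℝ) / s.card := by
  simp only [← auxS_def]
  have hP0 : 0 < (s.card : ℝ) := by exact_mod_cast Finset.card_pos.mpr hs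
  have hK0 : 0 < (K : ℝ) := by exact_mod_cast hK
  have hcK : (K : ℂ) ≠ 0 := Nat.cast_ne_zero.mpr (by omega)
  have hnormc : ‖((s.card : ℂ))⁻¹‖ = ((s.card : ℝ))⁻¹ := by
    rw [norm_inv, Complex.norm_natCast]
  have hnormK : ‖((K : ℂ))⁻¹‖ = ((K : ℝ))⁻¹ := by
    rw [norm_inv, Complex.norm_natCast]
  set A : H := ((s.card : ℂ))⁻¹ • ∑ n ∈ s, u n with hA
  set B : ℕ → H := fun j => ((s.card : ℂ))⁻¹ • ∑ n ∈ s, u (n + (j:ℤ)) with hB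
  set v : ℤ → H := fun n => ((K:ℂ))⁻¹ • ∑ j ∈ Finset.range K, u (n + (j:ℤ)) with hv
  set A' : H := ((K:ℂ))⁻¹ • ∑ j ∈ Finset.range K, B j with hA'
  -- inner products are bounded by C^2
  have hinner : ∀ (m k : ℤ), ‖(inner ℂ (u m) (u (m + k)) : ℂ)‖ ≤ C ^ 2 := by
    intro m k
    calc ‖(inner ℂ (u m) (u (m + k)) : ℂ)‖ ≤ ‖u m‖ * ‖u (m + k)‖ := norm_inner_le_norm _ _
      _ ≤ C * C := mul_le_mul (hu m) (hu (m + k)) (norm_nonneg _) hC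
      _ = C ^ 2 := by ring
  -- step 1 : ‖A - B j‖
  have hAB : ∀ j : ℕ, ‖A - B j‖ ≤ C *
      (((symmDiff (s.image (fun n => (j:ℤ) + n)) s).card : ℝ) / s.card) := by
    intro j
    have h1 : A - B j = ((s.card : ℂ))⁻¹ •
        ((∑ n ∈ s, u n) - ∑ n ∈ s, u (n + (j:ℤ))) := by
      rw [hA, hB, smul_sub]
    rw [h1, norm_smul, hnormc]
    have h2 : ‖(∑ n ∈ s, u n) - ∑ n ∈ s, u (n + (j:ℤ))‖ ≤
        C * ((symmDiff (s.image (fun n => (j:ℤ) + n)) s).card : ℝ) := by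
      rw [norm_sub_rev]
      exact aux_shift_err s _ u C hu
    calc ((s.card:ℝ))⁻¹ * ‖(∑ n ∈ s, u n) - ∑ n ∈ s, u (n + (j:ℤ))‖
        ≤ ((s.card:ℝ))⁻¹ * (C * ((symmDiff (s.image (fun n => (j:ℤ) + n)) s).card : ℝ)) := by
          gcongr
      _ = C * (((symmDiff (s.image (fun n => (j:ℤ) + n)) s).card : ℝ) / s.card) := by
          rw [div_eq_mul_inv]; ring
  -- norm bounds
  have hAle : ‖A‖ ≤ C := aux_avg_norm s C u hu
  have hBle : ∀ j : ℕ, ‖B j‖ ≤ C := fun j => aux_avg_norm s C _ (fun n => hu _)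
  have hA'le : ‖A'‖ ≤ C := by
    rw [hA', norm_smul, hnormK]
    calc ((K:ℝ))⁻¹ * ‖∑ j ∈ Finset.range K, B j‖ ≤ ((K:ℝ))⁻¹ * (C * K) := by
          gcongr
          calc ‖∑ j ∈ Finset.range K, B j‖ ≤ ∑ j ∈ Finset.range K, C :=
                norm_sum_le_of_le _ (fun j _ => hBle j)
            _ = C * K := by rw [Finset.sum_const, Finset.card_range, nsmul_eq_mul]; ring
      _ = C := by field_simp
  -- step 2 : ‖A - A'‖
  have hsplit : A - A' = ((K:ℂ))⁻¹ • ∑ j ∈ Finset.range K, (A - B j) := by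
    rw [Finset.sum_sub_distrib, smul_sub, hA']
    congr 1
    rw [Finset.sum_const, Finset.card_range, ← Nat.cast_smul_eq_nsmul ℂ, smul_smul,
      inv_mul_cancel₀ hcK, one_smul]
  have he : ‖A - A'‖ ≤ C / K * ∑ j ∈ Finset.range K,
      (((symmDiff (s.image (fun n => (j:ℤ) + n)) s).card : ℝ) / s.card) := by
    rw [hsplit, norm_smul, hnormK]
    calc ((K:ℝ))⁻¹ * ‖∑ j ∈ Finset.range K, (A - B j)‖
        ≤ ((K:ℝ))⁻¹ * ∑ j ∈ Finset.range K, ‖A - B j‖ := by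
          gcongr; exact norm_sum_le _ _
      _ ≤ ((K:ℝ))⁻¹ * ∑ j ∈ Finset.range K,
            C * (((symmDiff (s.image (fun n => (j:ℤ) + n)) s).card : ℝ) / s.card) := by
          gcongr with j hj; exact hAB j
      _ = C / K * ∑ j ∈ Finset.range K,
            (((symmDiff (s.image (fun n => (j:ℤ) + n)) s).card : ℝ) / s.card) := by
          rw [← Finset.mul_sum]; ring
  -- step 3 : square comparison
  have hsq : ‖A‖ ^ 2 ≤ ‖A'‖ ^ 2 + 4 * C * ‖A - A'‖ := by
    have h1 : ‖A‖ ≤ ‖A'‖ + ‖A - A'‖ := by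
      calc ‖A‖ = ‖A' + (A - A')‖ := by rw [add_sub_cancel]
        _ ≤ ‖A'‖ + ‖A - A'‖ := norm_add_le _ _
    have h2 : ‖A - A'‖ ≤ 2 * C := (norm_sub_le _ _).trans (by linarith)
    have h3 : ‖A‖ ^ 2 ≤ (‖A'‖ + ‖A - A'‖) ^ 2 :=
      pow_le_pow_left₀ (norm_nonneg A) h1 2
    nlinarith [h3, mul_le_mul_of_nonneg_right hA'le (norm_nonneg (A - A')),
      mul_le_mul_of_nonneg_right h2 (norm_nonneg (A - A'))]
  -- step 4 : A' as average of v
  have hA'v : A' = ((s.card : ℂ))⁻¹ • ∑ n ∈ s, v n := by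
    rw [hA', hB, hv]
    rw [← Finset.smul_sum, smul_comm, ← Finset.smul_sum, Finset.sum_comm]
  -- step 5 : Cauchy-Schwarz
  have hCS : ‖A'‖ ^ 2 ≤ ((s.card:ℝ))⁻¹ * ∑ n ∈ s, ‖v n‖ ^ 2 := by
    rw [hA'v, norm_smul, hnormc, mul_pow]
    calc (((s.card:ℝ))⁻¹) ^ 2 * ‖∑ n ∈ s, v n‖ ^ 2
        ≤ (((s.card:ℝ))⁻¹) ^ 2 * ((s.card:ℝ) * ∑ n ∈ s, ‖v n‖ ^ 2) := by
          gcongr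
          exact_mod_cast aux_cs s v
      _ = ((s.card:ℝ))⁻¹ * ∑ n ∈ s, ‖v n‖ ^ 2 := by field_simp
  -- step 6 : expansion of ‖v n‖²
  have hvn : ∀ n : ℤ, (‖v n‖ ^ 2 : ℝ) = ((K:ℂ)⁻¹ * (K:ℂ)⁻¹ *
      ∑ j ∈ Finset.range K, ∑ j' ∈ Finset.range K,
        (inner ℂ (u (n + (j:ℤ))) (u (n + (j':ℤ))) : ℂ)).re := by
    intro n
    have hset : (inner ℂ (v n) (v n) : ℂ) = (K:ℂ)⁻¹ * (K:ℂ)⁻¹ *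
        ∑ j ∈ Finset.range K, ∑ j' ∈ Finset.range K,
          (inner ℂ (u (n + (j:ℤ))) (u (n + (j':ℤ))) : ℂ) := by
      rw [hv]
      simp only [inner_smul_left, inner_smul_right, sum_inner, inner_sum, map_inv₀,
        Complex.conj_natCast, Finset.mul_sum]
      rw [Finset.sum_comm]
      refine Finset.sum_congr rfl fun j _ => Finset.sum_congr rfl fun j' _ => by ring
    rw [← @inner_self_eq_norm_sq ℂ, hset]
    rfl
  -- step 7 : P⁻¹ Σ‖v‖² = Re W
  set W : ℂ := ((s.card : ℂ))⁻¹ * ((K:ℂ)⁻¹ * (K:ℂ)⁻¹ *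
      ∑ j ∈ Finset.range K, ∑ j' ∈ Finset.range K,
        ∑ n ∈ s, (inner ℂ (u (n + (j:ℤ))) (u (n + (j':ℤ))) : ℂ)) with hW
  have hWre : ((s.card:ℝ))⁻¹ * ∑ n ∈ s, ‖v n‖ ^ 2 = W.re := by
    have h1 : (∑ n ∈ s, ‖v n‖ ^ 2)
        = (∑ n ∈ s, ((K:ℂ)⁻¹ * (K:ℂ)⁻¹ *
            ∑ j ∈ Finset.range K, ∑ j' ∈ Finset.range K,
              (inner ℂ (u (n + (j:ℤ))) (u (n + (j':ℤ))) : ℂ))).re := by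
      rw [Complex.re_sum]
      exact Finset.sum_congr rfl fun n _ => hvn n
    have h2 : (∑ n ∈ s, ((K:ℂ)⁻¹ * (K:ℂ)⁻¹ *
            ∑ j ∈ Finset.range K, ∑ j' ∈ Finset.range K,
              (inner ℂ (u (n + (j:ℤ))) (u (n + (j':ℤ))) : ℂ)))
        = (K:ℂ)⁻¹ * (K:ℂ)⁻¹ *
            ∑ j ∈ Finset.range K, ∑ j' ∈ Finset.range K,
              ∑ n ∈ s, (inner ℂ (u (n + (j:ℤ))) (u (n + (j':ℤ))) : ℂ) := by
      rw [← Finset.mul_sum]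
      congr 1
      rw [Finset.sum_comm]
      exact Finset.sum_congr rfl fun j _ => Finset.sum_comm
    have h3 : ((s.card : ℂ))⁻¹ = ((((s.card : ℝ))⁻¹ : ℝ) : ℂ) := by push_cast; rfl
    rw [h1, h2, hW, h3, Complex.re_ofReal_mul]
  -- step 8 : T vs S
  have hTS : ∀ j j' : ℕ, ‖(∑ n ∈ s, (inner ℂ (u (n + (j:ℤ))) (u (n + (j':ℤ))) : ℂ))
      - auxS s u ((j':ℤ) - (j:ℤ))‖ ≤
      C ^ 2 * ((symmDiff (s.image (fun n => (j:ℤ) + n)) s).card : ℝ) := by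
    intro j j'
    have h1 : (∑ n ∈ s, (inner ℂ (u (n + (j:ℤ))) (u (n + (j':ℤ))) : ℂ))
        = ∑ n ∈ s, (inner ℂ (u (n + (j:ℤ))) (u ((n + (j:ℤ)) + ((j':ℤ) - (j:ℤ)))) : ℂ) := by
      refine Finset.sum_congr rfl fun n _ => by
        rw [show (n + (j:ℤ)) + ((j':ℤ) - (j:ℤ)) = n + (j':ℤ) from by ring]
    rw [h1, auxS_def]
    exact aux_shift_err s (j:ℤ)
      (fun m => (inner ℂ (u m) (u (m + ((j':ℤ) - (j:ℤ)))) : ℂ)) (C^2) (fun m => hinner m _)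
  -- step 9 : W vs X
  set X : ℂ := ((s.card : ℂ))⁻¹ * ((K:ℂ)⁻¹ * (K:ℂ)⁻¹ *
      ∑ j ∈ Finset.range K, ∑ j' ∈ Finset.range K, auxS s u ((j':ℤ) - (j:ℤ))) with hX
  have hWX : ‖W - X‖ ≤ C ^ 2 / K * ∑ j ∈ Finset.range K,
      (((symmDiff (s.image (fun n => (j:ℤ) + n)) s).card : ℝ) / s.card) := by
    have hfac : W - X = ((s.card : ℂ))⁻¹ * ((K:ℂ)⁻¹ * (K:ℂ)⁻¹ *
        ∑ j ∈ Finset.range K, ∑ j' ∈ Finset.range K,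
          ((∑ n ∈ s, (inner ℂ (u (n + (j:ℤ))) (u (n + (j':ℤ))) : ℂ))
            - auxS s u ((j':ℤ) - (j:ℤ)))) := by
      rw [hW, hX]
      simp only [Finset.sum_sub_distrib]
      ring
    have hsum : ‖∑ j ∈ Finset.range K, ∑ j' ∈ Finset.range K,
        ((∑ n ∈ s, (inner ℂ (u (n + (j:ℤ))) (u (n + (j':ℤ))) : ℂ))
          - auxS s u ((j':ℤ) - (j:ℤ)))‖
        ≤ ∑ j ∈ Finset.range K,
            (K:ℝ) * (C ^ 2 * ((symmDiff (s.image (fun n => (j:ℤ) + n)) s).card : ℝ)) := by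
      refine (norm_sum_le _ _).trans (Finset.sum_le_sum fun j _ => ?_)
      refine (norm_sum_le _ _).trans ?_
      calc ∑ j' ∈ Finset.range K, ‖(∑ n ∈ s, (inner ℂ (u (n + (j:ℤ))) (u (n + (j':ℤ))) : ℂ))
              - auxS s u ((j':ℤ) - (j:ℤ))‖
          ≤ ∑ _j' ∈ Finset.range K,
              C ^ 2 * ((symmDiff (s.image (fun n => (j:ℤ) + n)) s).card : ℝ) :=
            Finset.sum_le_sum fun j' _ => hTS j j'
        _ = (K:ℝ) * (C ^ 2 * ((symmDiff (s.image (fun n => (j:ℤ) + n)) s).card : ℝ)) := by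
            rw [Finset.sum_const, Finset.card_range, nsmul_eq_mul]
    rw [hfac]
    simp only [norm_mul, hnormc, hnormK]
    calc ((s.card:ℝ))⁻¹ * (((K:ℝ))⁻¹ * ((K:ℝ))⁻¹ * ‖∑ j ∈ Finset.range K, ∑ j' ∈ Finset.range K,
            ((∑ n ∈ s, (inner ℂ (u (n + (j:ℤ))) (u (n + (j':ℤ))) : ℂ))
              - auxS s u ((j':ℤ) - (j:ℤ)))‖)
        ≤ ((s.card:ℝ))⁻¹ * (((K:ℝ))⁻¹ * ((K:ℝ))⁻¹ * ∑ j ∈ Finset.range K,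
            (K:ℝ) * (C ^ 2 * ((symmDiff (s.image (fun n => (j:ℤ) + n)) s).card : ℝ))) := by
          gcongr
      _ = C ^ 2 / K * ∑ j ∈ Finset.range K,
            (((symmDiff (s.image (fun n => (j:ℤ) + n)) s).card : ℝ) / s.card) := by
          rw [← Finset.mul_sum, ← Finset.mul_sum, ← Finset.sum_div]
          simp only [div_eq_mul_inv, mul_assoc, inv_mul_cancel_left₀ hK0.ne']
          ring
  -- step 10 : the target complex number is 2 * X
  have hZX : (2 / (K : ℂ) ^ 2) * (∑ k ∈ Finset.Icc (-(K : ℤ)) (K : ℤ),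
      (((K : ℤ) - |k| : ℤ) : ℂ) * (((s.card : ℂ))⁻¹ * auxS s u k)) = 2 * X := by
    rw [← aux_pairs K (fun k => ((s.card : ℂ))⁻¹ * auxS s u k), hX]
    simp only [← Finset.mul_sum]
    field_simp
  -- final assembly
  rw [hZX, norm_mul]
  have habs2 : ‖(2:ℂ)‖ = 2 := by norm_num
  rw [habs2]
  have hreX : W.re ≤ ‖X‖ + ‖W - X‖ := by
    have hsub : W.re = X.re + (W - X).re := by rw [Complex.sub_re]; ring
    have h1 : X.re ≤ ‖X‖ := Complex.re_le_norm X
    have h2 : (W - X).re ≤ ‖W - X‖ := by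
      exact Complex.re_le_norm _
    linarith
  have h4 : 4 * C * ‖A - A'‖ ≤ 4 * C * (C / K * ∑ j ∈ Finset.range K,
      (((symmDiff (s.image (fun n => (j:ℤ) + n)) s).card : ℝ) / s.card)) :=
    mul_le_mul_of_nonneg_left he (by positivity)
  have habsX : 0 ≤ ‖X‖ := norm_nonneg _
  have hchain : ‖A‖ ^ 2 ≤ ‖X‖ + ‖W - X‖ + 4 * C * (C / K * ∑ j ∈ Finset.range K,
      (((symmDiff (s.image (fun n => (j:ℤ) + n)) s).card : ℝ) / s.card)) := by
    have := hWre
    linarith [hsq, hCS, hreX, h4]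
  have h5 : C ^ 2 / (K:ℝ) * (∑ j ∈ Finset.range K,
        (((symmDiff (s.image (fun n => (j:ℤ) + n)) s).card : ℝ) / s.card))
      + 4 * C * (C / (K:ℝ) * ∑ j ∈ Finset.range K,
        (((symmDiff (s.image (fun n => (j:ℤ) + n)) s).card : ℝ) / s.card))
      = 5 * C ^ 2 / (K:ℝ) * ∑ j ∈ Finset.range K,
        (((symmDiff (s.image (fun n => (j:ℤ) + n)) s).card : ℝ) / s.card) := by
    ring
  linarith [hWX, hchain, habsX, h5]

set_option maxHeartbeats 800000 in
lemma aux_lb (s : Finset ℤ) (hs : s.Nonempty) (C : ℝ) (hC : 0 ≤ C) (u : ℤ → H)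
    (hu : ∀ n, ‖u n‖ ≤ C) (K : ℕ) (hK : 1 ≤ K) :
    ‖((2 / (K : ℂ) ^ 2) * ∑ k ∈ Finset.Icc (-(K : ℤ)) (K : ℤ),
      (((K : ℤ) - |k| : ℤ) : ℂ) *
        (((s.card : ℂ))⁻¹ * ∑ n ∈ s, (inner ℂ (u n) (u (n + k)) : ℂ)))‖
      ≤ 2 / (K:ℝ) ^ 2 * ((2 * K + 1) * ((K:ℝ) * C ^ 2)) := by
  have hP0 : 0 < (s.card : ℝ) := by exact_mod_cast Finset.card_pos.mpr hs
  have hK0 : 0 < (K : ℝ) := by exact_mod_cast hK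
  have hinner : ∀ (m k : ℤ), ‖(inner ℂ (u m) (u (m + k)) : ℂ)‖ ≤ C ^ 2 := by
    intro m k
    calc ‖(inner ℂ (u m) (u (m + k)) : ℂ)‖ ≤ ‖u m‖ * ‖u (m + k)‖ := norm_inner_le_norm _ _
      _ ≤ C * C := mul_le_mul (hu m) (hu (m + k)) (norm_nonneg _) hC
      _ = C ^ 2 := by ring
  rw [norm_mul]
  have h1 : ‖(2 / (K:ℂ) ^ 2)‖ = 2 / (K:ℝ) ^ 2 := by
    rw [norm_div, norm_pow, Complex.norm_natCast]
    norm_num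
  rw [h1]
  have hterm : ∀ k ∈ Finset.Icc (-(K:ℤ)) (K:ℤ),
      ‖((((K : ℤ) - |k| : ℤ) : ℂ) *
        (((s.card : ℂ))⁻¹ * ∑ n ∈ s, (inner ℂ (u n) (u (n + k)) : ℂ)))‖
      ≤ (K:ℝ) * C ^ 2 := by
    intro k hk
    simp only [Finset.mem_Icc] at hk
    rw [norm_mul, norm_mul, norm_inv, Complex.norm_natCast]
    have hkabs : |(k:ℝ)| ≤ (K:ℝ) := by
      rw [abs_le]
      exact ⟨by exact_mod_cast hk.1, by exact_mod_cast hk.2⟩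
    have hc1 : ‖(((K : ℤ) - |k| : ℤ) : ℂ)‖ ≤ (K:ℝ) := by
      rw [Complex.norm_intCast]
      push_cast
      rw [abs_of_nonneg (by linarith [abs_nonneg (k:ℝ)])]
      linarith [abs_nonneg (k:ℝ)]
    have hc3 : ‖(∑ n ∈ s, (inner ℂ (u n) (u (n + k)) : ℂ))‖ ≤ s.card * C ^ 2 := by
      calc ‖∑ n ∈ s, (inner ℂ (u n) (u (n + k)) : ℂ)‖ ≤ ∑ n ∈ s, C ^ 2 :=
            norm_sum_le_of_le _ (fun n _ => hinner n k)
        _ = s.card * C ^ 2 := by rw [Finset.sum_const, nsmul_eq_mul]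
    calc ‖(((K : ℤ) - |k| : ℤ) : ℂ)‖ *
          (((s.card:ℝ))⁻¹ * ‖(∑ n ∈ s, (inner ℂ (u n) (u (n + k)) : ℂ))‖)
        ≤ (K:ℝ) * (((s.card:ℝ))⁻¹ * ((s.card:ℝ) * C ^ 2)) := by
          gcongr
      _ = (K:ℝ) * C ^ 2 := by field_simp
  have hcard : ((Finset.Icc (-(K:ℤ)) (K:ℤ)).card : ℝ) = 2 * K + 1 := by
    have h2 : ((K:ℤ) + 1 - -(K:ℤ)).toNat = 2 * K + 1 := by omega
    rw [Int.card_Icc, h2]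
    push_cast
    try ring
  have hsum : ‖(∑ k ∈ Finset.Icc (-(K:ℤ)) (K:ℤ),
      (((K : ℤ) - |k| : ℤ) : ℂ) *
        (((s.card : ℂ))⁻¹ * ∑ n ∈ s, (inner ℂ (u n) (u (n + k)) : ℂ)))‖
      ≤ (2 * K + 1) * ((K:ℝ) * C ^ 2) := by
    refine (norm_sum_le _ _).trans ?_
    calc ∑ k ∈ Finset.Icc (-(K:ℤ)) (K:ℤ), ‖(((K : ℤ) - |k| : ℤ) : ℂ) *
            (((s.card : ℂ))⁻¹ * ∑ n ∈ s, (inner ℂ (u n) (u (n + k)) : ℂ))‖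
        ≤ ∑ _k ∈ Finset.Icc (-(K:ℤ)) (K:ℤ), (K:ℝ) * C ^ 2 :=
          Finset.sum_le_sum (fun k hk => by
            exact hterm k hk)
      _ = (2 * K + 1) * ((K:ℝ) * C ^ 2) := by
          rw [Finset.sum_const, nsmul_eq_mul, hcard]
  calc 2 / (K:ℝ) ^ 2 * ‖(∑ k ∈ Finset.Icc (-(K:ℤ)) (K:ℤ),
        (((K : ℤ) - |k| : ℤ) : ℂ) *
          (((s.card : ℂ))⁻¹ * ∑ n ∈ s, (inner ℂ (u n) (u (n + k)) : ℂ)))‖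
      ≤ 2 / (K:ℝ) ^ 2 * ((2 * K + 1) * ((K:ℝ) * C ^ 2)) := by
        gcongr

end main

end vdcaux

/-- **Van der Corput estimate** (quantitative version, Lemma `VdC`). -/
theorem stmt_10 {H : Type} [NormedAddCommGroup H] [InnerProductSpace ℂ H]
    (Φ : ℕ → Finset ℤ) (hne : ∀ N, (Φ N).Nonempty)
    (hFol : ∀ k : ℤ, Tendsto (fun N =>
        ((symmDiff (Finset.image (fun n => k + n) (Φ N)) (Φ N)).card : ℝ) / (Φ N).card)
      atTop (nhds 0))
    (C : ℝ) (hC : 0 ≤ C) (u : ℤ → H) (hu : ∀ n, ‖u n‖ ≤ C) (K : ℕ) (hK : 1 ≤ K) :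
    limsup (fun N =>
      ‖(((Φ N).card : ℂ))⁻¹ • ∑ n ∈ Φ N, u n‖ ^ 2
        - ‖((2 / (K : ℂ) ^ 2) * ∑ k ∈ Finset.Icc (-(K : ℤ)) (K : ℤ),
            (((K : ℤ) - |k| : ℤ) : ℂ) *
              (((Φ N).card : ℂ)⁻¹ * ∑ n ∈ Φ N, (inner ℂ (u n) (u (n + k)) : ℂ)))‖)
      atTop ≤ 0 := by
  have key : ∀ N, ‖(((Φ N).card : ℂ))⁻¹ • ∑ n ∈ Φ N, u n‖ ^ 2
      - ‖((2 / (K : ℂ) ^ 2) * ∑ k ∈ Finset.Icc (-(K : ℤ)) (K : ℤ),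
          (((K : ℤ) - |k| : ℤ) : ℂ) *
            (((Φ N).card : ℂ)⁻¹ * ∑ n ∈ Φ N, (inner ℂ (u n) (u (n + k)) : ℂ)))‖
      ≤ 5 * C ^ 2 / K * ∑ j ∈ Finset.range K,
          ((symmDiff ((Φ N).image (fun n => (j : ℤ) + n)) (Φ N)).card : ℝ) / (Φ N).card :=
    fun N => aux_main (Φ N) (hne N) C hC u hu K hK
  have hd : Tendsto (fun N => 5 * C ^ 2 / K * ∑ j ∈ Finset.range K,
      ((symmDiff ((Φ N).image (fun n => (j : ℤ) + n)) (Φ N)).card : ℝ) / (Φ N).card)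
      atTop (nhds 0) := by
    have hsum : Tendsto (fun N => ∑ j ∈ Finset.range K,
        ((symmDiff ((Φ N).image (fun n => (j : ℤ) + n)) (Φ N)).card : ℝ) / (Φ N).card)
        atTop (nhds 0) := by
      have h0 := tendsto_finset_sum (Finset.range K)
        (fun (j : ℕ) (_ : j ∈ Finset.range K) => hFol (j : ℤ))
      simpa using h0
    have := hsum.const_mul (5 * C ^ 2 / (K:ℝ))
    simpa using this
  have hlow : ∀ N, -(2 / (K:ℝ) ^ 2 * ((2 * K + 1) * ((K:ℝ) * C ^ 2)))
      ≤ ‖(((Φ N).card : ℂ))⁻¹ • ∑ n ∈ Φ N, u n‖ ^ 2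
        - ‖((2 / (K : ℂ) ^ 2) * ∑ k ∈ Finset.Icc (-(K : ℤ)) (K : ℤ),
            (((K : ℤ) - |k| : ℤ) : ℂ) *
              (((Φ N).card : ℂ)⁻¹ * ∑ n ∈ Φ N, (inner ℂ (u n) (u (n + k)) : ℂ)))‖ := by
    intro N
    have h1 := aux_lb (Φ N) (hne N) C hC u hu K hK
    have h2 : (0:ℝ) ≤ ‖(((Φ N).card : ℂ))⁻¹ • ∑ n ∈ Φ N, u n‖ ^ 2 := sq_nonneg _
    linarith
  have hcb : IsCoboundedUnder (· ≤ ·) atTop (fun N =>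
      ‖(((Φ N).card : ℂ))⁻¹ • ∑ n ∈ Φ N, u n‖ ^ 2
        - ‖((2 / (K : ℂ) ^ 2) * ∑ k ∈ Finset.Icc (-(K : ℤ)) (K : ℤ),
            (((K : ℤ) - |k| : ℤ) : ℂ) *
              (((Φ N).card : ℂ)⁻¹ * ∑ n ∈ Φ N, (inner ℂ (u n) (u (n + k)) : ℂ)))‖) :=
    isCoboundedUnder_le_of_le atTop hlow
  have hbd : IsBoundedUnder (· ≤ ·) atTop (fun N => 5 * C ^ 2 / (K:ℝ) * ∑ j ∈ Finset.range K,
      ((symmDiff ((Φ N).image (fun n => (j : ℤ) + n)) (Φ N)).card : ℝ) / (Φ N).card) :=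
    hd.isBoundedUnder_le
  calc limsup _ atTop ≤ limsup (fun N => 5 * C ^ 2 / (K:ℝ) * ∑ j ∈ Finset.range K,
        ((symmDiff ((Φ N).image (fun n => (j : ℤ) + n)) (Φ N)).card : ℝ) / (Φ N).card) atTop :=
      limsup_le_limsup (Eventually.of_forall key) hcb hbd
    _ = 0 := hd.limsup_eq
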